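/- Let A be a unital algebra with an action α of C_n by algebra automorphisms such that the isotypic component A_1 = {a ∈ A : α(ζ)·a = ζ·a} contains an invertible element. Then the induced action of C_n on the set of nonzero algebra homomorphisms χ : A → ℂ, given by χ·ζ^k := χ ∘ α(ζ^k), is free: if χ ∘ α(ζ^l) = χ for some character χ and 0 ≤ l ≤ n−1, then l = 0. -/

import Mathlib

open Complex

/-- Let `A` be a unital complex algebra with an action
`α : C_n → Aut(A)` such that the isotypic component
`A₁ = {a : α(ζ)·a = ζ·a}` (with `ζ = exp(2πi/n)`) contains an invertible element.
Then the induced action of `C_n` on the spectrum of `A` (the nonzero algebra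
homomorphisms `χ : A → ℂ`), given by `χ·ζ^l := χ ∘ α(ζ^l)`, is free: if
`χ ∘ α(ζ^l) = χ` for some `0 ≤ l < n`, then `l = 0`. -/
theorem stmt5 (n : ℕ) (hn : 0 < n) (A : Type*) [Ring A] [Algebra ℂ A]
    (α : Multiplicative (ZMod n) →* (A ≃ₐ[ℂ] A))
    (ha : ∃ a : Aˣ, α (Multiplicative.ofAdd (1 : ZMod n)) (a : A) =
      Complex.exp (2 * Real.pi * Complex.I / n) • (a : A)) :
    ∀ (χ : A →ₐ[ℂ] ℂ) (l : ℕ), l < n →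
      (∀ x : A, χ (α (Multiplicative.ofAdd (l : ZMod n)) x) = χ x) → l = 0 := by
  intro χ l hl hfix
  obtain ⟨a, haa⟩ := ha
  set ζ : ℂ := Complex.exp (2 * Real.pi * Complex.I / n) with hζ
  -- α(l) a = ζ^l a
  have key : ∀ m : ℕ, α (Multiplicative.ofAdd ((m : ZMod n))) (a : A) = ζ ^ m • (a : A) := by
    intro m
    induction m with
    | zero => simp
    | succ k ih =>
      have : ((k + 1 : ℕ) : ZMod n) = (k : ZMod n) + 1 := by push_cast; ring
      rw [this]
      have : Multiplicative.ofAdd ((k : ZMod n) + 1) =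
          Multiplicative.ofAdd ((k : ZMod n)) * Multiplicative.ofAdd (1 : ZMod n) := rfl
      rw [this, map_mul]
      simp only [AlgEquiv.mul_apply]
      rw [haa, map_smul, ih, smul_smul, pow_succ]
      ring_nf
  have h1 := hfix (a : A)
  rw [key l] at h1
  have hχa : χ (a : A) ≠ 0 := by
    intro h
    have : χ ((a : A) * ((a⁻¹ : Aˣ) : A)) = 1 := by rw [Units.mul_inv]; simp
    rw [map_mul, h, zero_mul] at this
    exact one_ne_zero this.symm
  rw [map_smul, smul_eq_mul] at h1
  have hζl : ζ ^ l = 1 :=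
    mul_right_cancel₀ hχa (h1.trans (one_mul _).symm)
  -- ζ^l = exp(2πi l/n) = 1 ⇒ n ∣ l
  rw [← Complex.exp_nat_mul, Complex.exp_eq_one_iff] at hζl
  obtain ⟨k, hk⟩ := hζl
  have hn' : (n : ℂ) ≠ 0 := Nat.cast_ne_zero.mpr hn.ne'
  have hpi : (2 * Real.pi * Complex.I : ℂ) ≠ 0 := by
    simp [Real.pi_ne_zero, Complex.I_ne_zero]
  have : (l : ℂ) = k * n := by
    field_simp at hk
    exact mul_right_cancel₀ hpi (by linear_combination (2 * Real.pi * Complex.I) * hk)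
  have hlk : (l : ℤ) = k * n := by exact_mod_cast this
  have : (n:ℤ) ∣ (l:ℤ) := ⟨k, by linarith⟩
  have : n ∣ l := by exact_mod_cast this
  exact Nat.eq_zero_of_dvd_of_lt this hl
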